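/- The number of equivalence classes of arrays A[1..n] of distinct values under the equivalence 'giving the same answer to every range minimum query RMQ(i,j)' equals the n-th Catalan number C_n = (1/(n+1))·binomial(2n,n). -/

import Mathlib

inductive BT where
  | leaf : BT
  | node : BT → BT → BT
deriving DecidableEq

namespace BT

/-- Number of nodes. -/
def size : BT → ℕ
  | leaf => 0
  | node l r => l.size + r.size + 1

/-- Inorder list of node positions (paths from the root; `false` = left step). -/
def inList : BT → List (List Bool)
  | leaf => []
  | node l r => (l.inList).map (List.cons false) ++ [] :: (r.inList).map (List.cons true)

/-- Preorder list of node positions. -/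
def preList : BT → List (List Bool)
  | leaf => []
  | node l r => [] :: ((l.preList).map (List.cons false) ++ (r.preList).map (List.cons true))

/-- Subtree rooted at a given position, if the position is valid. -/
def subtree? : BT → List Bool → Option BT
  | t, [] => some t
  | leaf, _ :: _ => none
  | node l r, b :: p => if b then r.subtree? p else l.subtree? p

/-- Size of the left spine (maximal path following left children, top node included). -/
def Lspine : BT → ℕ
  | leaf => 0
  | node l _ => l.Lspine + 1

/-- Size of the right spine. -/
def Rspine : BT → ℕ
  | leaf => 0
  | node _ r => r.Rspine + 1

/-- Size of the left inner spine of the root: right spine of the left child. -/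
def lv : BT → ℕ
  | leaf => 0
  | node l _ => l.Rspine

/-- Size of the right inner spine of the root: left spine of the right child. -/
def rv : BT → ℕ
  | leaf => 0
  | node _ r => r.Lspine

/-- Sum of `f` over all (sub)trees rooted at nodes of the tree. -/
def sumNodes (f : BT → ℕ) : BT → ℕ
  | leaf => 0
  | node l r => f (node l r) + sumNodes f l + sumNodes f r

/-- Number of leaf nodes (nodes with no children). -/
def leaves : BT → ℕ
  | leaf => 0
  | node leaf leaf => 1
  | node l r => leaves l + leaves r

end BT

/-- Longest common prefix of two paths: the LCA of two positions in a binary tree. -/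
def lcp : List Bool → List Bool → List Bool
  | a :: p, b :: q => if a = b then a :: lcp p q else []
  | _, _ => []

/-- Index of the minimum element of a list (0 if empty). -/
def minIdx {α : Type*} [LinearOrder α] (l : List α) : ℕ :=
  match l.argmin id with
  | none => 0
  | some a => l.idxOf a

/-- Cartesian tree construction with fuel. -/
def cartesianAux {α : Type*} [LinearOrder α] : ℕ → List α → BT
  | 0, _ => .leaf
  | _ + 1, [] => .leaf
  | n + 1, l@(_ :: _) =>
      .node (cartesianAux n (l.take (minIdx l))) (cartesianAux n (l.drop (minIdx l + 1)))

/-- The Cartesian tree of a list: root at the position of the minimum,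
recursively built on the prefix before and the suffix after the minimum. -/
def cartesian {α : Type*} [LinearOrder α] (l : List α) : BT :=
  cartesianAux l.length l

/-- `k` is the position of the minimum of `A` on the range `[i, j]`. -/
def isArgmin {α : Type*} [LinearOrder α] {n : ℕ} (A : Fin n → α) (i j k : Fin n) : Prop :=
  i ≤ k ∧ k ≤ j ∧ ∀ m, i ≤ m → m ≤ j → A k ≤ A m

/-- `k` is the position of the second smallest element of `A` on the range `[i, j]`. -/
def isSecondMin {α : Type*} [LinearOrder α] {n : ℕ} (A : Fin n → α) (i j k : Fin n) : Prop :=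
  i ≤ k ∧ k ≤ j ∧
    ∃ m, isArgmin A i j m ∧ k ≠ m ∧ ∀ l, i ≤ l → l ≤ j → l ≠ m → A k ≤ A l

/-- The node with inorder number `i` in `t` has a left child. -/
def hasLeftChildAt (t : BT) (i : ℕ) : Prop :=
  ∃ (p : List Bool) (ll lr r : BT),
    t.inList[i]? = some p ∧ t.subtree? p = some (.node (.node ll lr) r)

namespace RMQAux

open BT

/-! ### argmin index over an interval -/

noncomputable def mi (F : ℕ → ℝ) (i j : ℕ) : ℕ :=
  if h : (Finset.Icc i j).Nonempty then
    (Finset.exists_min_image (Finset.Icc i j) F h).choose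
  else i

lemma mi_spec (F : ℕ → ℝ) {i j : ℕ} (h : i ≤ j) :
    (i ≤ mi F i j ∧ mi F i j ≤ j) ∧ ∀ m, i ≤ m → m ≤ j → F (mi F i j) ≤ F m := by
  have hne : (Finset.Icc i j).Nonempty := ⟨i, by simp [h]⟩
  have := (Finset.exists_min_image (Finset.Icc i j) F hne).choose_spec
  rw [mi, dif_pos hne]
  refine ⟨by simpa [Finset.mem_Icc] using this.1, fun m hm1 hm2 => this.2 m (by simp [Finset.mem_Icc, hm1, hm2])⟩

lemma mi_unique (F : ℕ → ℝ) {n i j k : ℕ}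
    (hInj : ∀ x y, x < n → y < n → F x = F y → x = y)
    (hij : i ≤ j) (hj : j < n) (hk1 : i ≤ k) (hk2 : k ≤ j)
    (hmin : ∀ m, i ≤ m → m ≤ j → F k ≤ F m) : mi F i j = k := by
  obtain ⟨⟨h1, h2⟩, h3⟩ := mi_spec F hij
  exact hInj _ _ (by omega) (by omega) (le_antisymm (h3 k hk1 hk2) (hmin _ h1 h2))

/-! ### build a tree from the argmin oracle, with fuel; range is half-open [i, j) -/

noncomputable def bld (F : ℕ → ℝ) : ℕ → ℕ → ℕ → BT
  | 0, _, _ => .leaf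
  | fuel+1, i, j =>
    if i < j then
      .node (bld F fuel i (mi F i (j-1))) (bld F fuel (mi F i (j-1) + 1) j)
    else .leaf

lemma size_bld (F : ℕ → ℝ) : ∀ fuel i j, j - i ≤ fuel → (bld F fuel i j).size = j - i := by
  intro fuel
  induction fuel with
  | zero => intro i j h; simp [bld, size]; omega
  | succ fuel ih =>
    intro i j h
    by_cases hij : i < j
    · have hmi := (mi_spec F (show i ≤ j - 1 by omega)).1
      rw [bld, if_pos hij]
      have hl := ih i (mi F i (j-1)) (by omega)
      have hr := ih (mi F i (j-1) + 1) j (by omega)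
      simp only [size, hl, hr]; omega
    · rw [bld, if_neg hij]; simp [size]; omega

/-- If two oracles have the same argmins everywhere below `n`, they build the same trees. -/
lemma bld_eq_of_mi_eq (F G : ℕ → ℝ) (n : ℕ)
    (hmi : ∀ p q, p ≤ q → q < n → mi F p q = mi G p q) :
    ∀ fuel i j, j ≤ n → bld F fuel i j = bld G fuel i j := by
  intro fuel
  induction fuel with
  | zero => intro i j _; rfl
  | succ fuel ih =>
    intro i j hj
    by_cases hij : i < j
    · have hk : mi F i (j-1) = mi G i (j-1) := hmi i (j-1) (by omega) (by omega)
      have hb := (mi_spec F (show i ≤ j - 1 by omega)).1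
      rw [bld, bld, if_pos hij, if_pos hij, hk,
        ih i (mi G i (j-1)) (by omega), ih (mi G i (j-1) + 1) j hj]
    · rw [bld, bld, if_neg hij, if_neg hij]

/-- If two injective oracles build the same tree on [i,j), their argmins agree inside. -/
lemma mi_eq_of_bld_eq (F G : ℕ → ℝ) (n : ℕ)
    (hF : ∀ x y, x < n → y < n → F x = F y → x = y)
    (hG : ∀ x y, x < n → y < n → G x = G y → x = y) :
    ∀ fuel i j, j ≤ n → j - i ≤ fuel → bld F fuel i j = bld G fuel i j →
      ∀ p q, i ≤ p → p ≤ q → q < j → mi F p q = mi G p q := by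
  intro fuel
  induction fuel with
  | zero => intro i j _ _ _ p q h1 h2 h3; omega
  | succ fuel ih =>
    intro i j hjn hfuel heq p q hp hpq hqj
    have hij : i < j := by omega
    rw [bld, bld, if_pos hij, if_pos hij] at heq
    set k := mi F i (j-1) with hkdef
    set k' := mi G i (j-1) with hk'def
    obtain ⟨⟨hk1, hk2⟩, hkmin⟩ := mi_spec F (show i ≤ j - 1 by omega)
    obtain ⟨⟨hk'1, hk'2⟩, hk'min⟩ := mi_spec G (show i ≤ j - 1 by omega)
    rw [← hkdef] at hk1 hk2 hkmin
    rw [← hk'def] at hk'1 hk'2 hk'min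
    have hL := (BT.node.injEq _ _ _ _).mp heq
    have hkeq : k = k' := by
      have s1 := size_bld F fuel i k (by omega)
      have s2 := size_bld G fuel i k' (by omega)
      rw [hL.1] at s1; omega
    rcases lt_trichotomy q k with hq | hq | hq
    · rcases le_or_gt k p with hkp | hkp
      · omega
      · -- [p,q] ⊆ [i,k)
        exact ih i k (by omega) (by omega) (hkeq ▸ hL.1) p q hp hpq hq
    · -- k ∈ [p,q] (q = k); then both argmins are k
      subst hq
      have e1 : mi F p k = k := mi_unique F hF hpq (by omega) hpq (le_refl _)
        (fun m hm1 hm2 => hkmin m (by omega) (by omega))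
      have e2 : mi G p k = k := mi_unique G hG hpq (by omega) hpq (le_refl _)
        (fun m hm1 hm2 => by rw [hkeq]; exact hk'min m (by omega) (by omega))
      rw [e1, e2]
    · rcases le_or_gt p k with hpk | hpk
      · have e1 : mi F p q = k := mi_unique F hF hpq (by omega) hpk (by omega)
          (fun m hm1 hm2 => hkmin m (by omega) (by omega))
        have e2 : mi G p q = k := mi_unique G hG hpq (by omega) hpk (by omega)
          (fun m hm1 hm2 => by rw [hkeq]; exact hk'min m (by omega) (by omega))
        rw [e1, e2]
      · -- [p,q] ⊆ [k+1, j)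
        exact ih (k+1) j hjn (by omega) (hkeq ▸ hL.2) p q (by omega) hpq hqj

/-! ### preorder labelling of a tree -/

def mkN : BT → ℕ → List ℕ
  | .leaf, _ => []
  | .node l r, c => mkN l (c+1) ++ c :: mkN r (c + 1 + l.size)

lemma mkN_length (t : BT) : ∀ c, (mkN t c).length = t.size := by
  induction t with
  | leaf => intro c; rfl
  | node l r ihl ihr => intro c; simp [mkN, size, ihl, ihr]; omega

lemma mkN_mem_bounds (t : BT) : ∀ c x, x ∈ mkN t c → c ≤ x ∧ x < c + t.size := by
  induction t with
  | leaf => intro c x hx; simp [mkN] at hx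
  | node l r ihl ihr =>
    intro c x hx
    simp only [mkN, List.mem_append, List.mem_cons] at hx
    rcases hx with h | h | h
    · have := ihl _ _ h; simp [size]; omega
    · simp [size]; omega
    · have := ihr _ _ h; simp [size]; omega

lemma mkN_nodup (t : BT) : ∀ c, (mkN t c).Nodup := by
  induction t with
  | leaf => intro c; simp [mkN]
  | node l r ihl ihr =>
    intro c
    rw [mkN, List.nodup_append]
    refine ⟨ihl _, ?_, ?_⟩
    · rw [List.nodup_cons]
      refine ⟨fun h => ?_, ihr _⟩
      have := mkN_mem_bounds r _ _ h; omega
    · intro x hx y hy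
      have h1 := mkN_mem_bounds l _ _ hx
      rcases List.mem_cons.mp hy with h | h
      · omega
      · have := mkN_mem_bounds r _ _ h; omega

/-! ### shape predicate -/

def Shaped (F : ℕ → ℝ) : ℕ → BT → Prop
  | _, .leaf => True
  | i, .node l r =>
    (∀ x, i ≤ x → x < i + (BT.node l r).size → x ≠ i + l.size → F (i + l.size) < F x)
    ∧ Shaped F i l ∧ Shaped F (i + l.size + 1) r

lemma shaped_mkN (t : BT) : ∀ c i (F : ℕ → ℝ),
    (∀ x, x < t.size → F (i + x) = ((mkN t c).getD x 0 : ℕ)) → Shaped F i t := by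
  induction t with
  | leaf => intro c i F _; trivial
  | node l r ihl ihr =>
    intro c i F hF
    have hlen : (mkN l (c+1)).length = l.size := mkN_length l _
    have hroot : F (i + l.size) = (c : ℝ) := by
      have := hF l.size (by simp [size])
      rwa [mkN, List.getD_append_right _ _ _ _ (by omega), hlen, Nat.sub_self, List.getD_cons_zero] at this
    refine ⟨?_, ?_, ?_⟩
    · intro x hx1 hx2 hx3
      have hxlt : x - i < (BT.node l r).size := by omega
      have hval := hF (x - i) hxlt
      have hx' : i + (x - i) = x := by omega
      rw [hx'] at hval
      rcases lt_trichotomy (x - i) l.size with h | h | h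
      · rw [mkN, List.getD_append _ _ _ _ (by omega)] at hval
        have hmem : (mkN l (c+1)).getD (x-i) 0 ∈ mkN l (c+1) := by
          rw [List.getD_eq_getElem _ _ (by omega)]; exact List.getElem_mem _
        have := mkN_mem_bounds l _ _ hmem
        rw [hval, hroot]; exact_mod_cast (by omega : c < (mkN l (c+1)).getD (x-i) 0)
      · omega
      · rw [mkN, List.getD_append_right _ _ _ _ (by omega), hlen] at hval
        have h2 : x - i - l.size = (x - i - l.size - 1) + 1 := by omega
        rw [h2, List.getD_cons_succ] at hval
        have hmem : (mkN r (c+1+l.size)).getD (x-i-l.size-1) 0 ∈ mkN r (c+1+l.size) := by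
          rw [List.getD_eq_getElem _ _ (by rw [mkN_length]; simp [size] at hxlt ⊢; omega)]
          exact List.getElem_mem _
        have := mkN_mem_bounds r _ _ hmem
        rw [hval, hroot]; exact_mod_cast (by omega : c < (mkN r (c+1+l.size)).getD (x-i-l.size-1) 0)
    · refine ihl (c+1) i F (fun x hx => ?_)
      have := hF x (by simp [size]; omega)
      rwa [mkN, List.getD_append _ _ _ _ (by omega)] at this
    · refine ihr (c+1+l.size) (i + l.size + 1) F (fun x hx => ?_)
      have := hF (l.size + 1 + x) (by simp [size]; omega)
      rw [mkN, List.getD_append_right _ _ _ _ (by omega), hlen] at this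
      have h2 : l.size + 1 + x - l.size = x + 1 := by omega
      rw [h2, List.getD_cons_succ] at this
      have h3 : i + (l.size + 1 + x) = i + l.size + 1 + x := by omega
      rwa [h3] at this

/-- Building from an oracle that is shaped like `t` on `[i, i + t.size)` yields `t`. -/
lemma bld_shaped (F : ℕ → ℝ) : ∀ fuel t i, t.size ≤ fuel → Shaped F i t →
    bld F fuel i (i + t.size) = t := by
  intro fuel
  induction fuel with
  | zero =>
    intro t i h _
    cases t with
    | leaf => rfl
    | node l r => simp [size] at h
  | succ fuel ih =>
    intro t i h hsh
    cases t with
    | leaf => rw [show i + size .leaf = i from rfl, bld, if_neg (lt_irrefl i)]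
    | node l r =>
      obtain ⟨hmin, hshl, hshr⟩ := hsh
      have hsz : (BT.node l r).size = l.size + r.size + 1 := rfl
      have hij : i < i + (BT.node l r).size := by omega
      rw [bld, if_pos hij]
      have hk : mi F i (i + (BT.node l r).size - 1) = i + l.size := by
        obtain ⟨⟨h1, h2⟩, h3⟩ := mi_spec F (show i ≤ i + (BT.node l r).size - 1 by omega)
        by_contra hne
        have hlt := hmin _ h1 (by omega) hne
        have hle := h3 (i + l.size) (by omega) (by omega)
        exact absurd (lt_of_le_of_lt hle hlt) (lt_irrefl _)
      have hleft := ih l i (by omega) hshl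
      have hright := ih r (i + l.size + 1) (by omega) hshr
      have he : i + (BT.node l r).size = (i + l.size + 1) + r.size := by omega
      rw [hk, he, hleft, hright]

/-! ### arrays from trees, and the argmin function of an array -/

noncomputable def extF {n : ℕ} (A : Fin n → ℝ) : ℕ → ℝ :=
  fun x => if h : x < n then A ⟨x, h⟩ else 0

noncomputable def fOf {n : ℕ} (A : Fin n → ℝ) : ∀ i j : Fin n, i ≤ j → Fin n :=
  fun i j h => ⟨mi (extF A) i j,
    lt_of_le_of_lt ((mi_spec (extF A) (show (i:ℕ) ≤ j from h)).1.2) j.isLt⟩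

lemma extF_inj {n : ℕ} {A : Fin n → ℝ} (hA : Function.Injective A) :
    ∀ x y, x < n → y < n → extF A x = extF A y → x = y := by
  intro x y hx hy hxy
  rw [extF, extF, dif_pos hx, dif_pos hy] at hxy
  exact congrArg Fin.val (hA hxy)

lemma extF_apply {n : ℕ} (A : Fin n → ℝ) (m : Fin n) : extF A m = A m := by
  simp [extF]

lemma isArgmin_fOf {n : ℕ} (A : Fin n → ℝ) (i j : Fin n) (h : i ≤ j) :
    isArgmin A i j (fOf A i j h) := by
  obtain ⟨⟨h1, h2⟩, h3⟩ := mi_spec (extF A) (show (i:ℕ) ≤ j from h)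
  refine ⟨h1, h2, fun m hm1 hm2 => ?_⟩
  have h4 : extF A ↑(fOf A i j h) ≤ extF A ↑m := h3 m hm1 hm2
  rwa [extF_apply, extF_apply] at h4

lemma fOf_unique {n : ℕ} {A : Fin n → ℝ} (hA : Function.Injective A)
    {i j k : Fin n} (h : i ≤ j) (hk : isArgmin A i j k) : k = fOf A i j h := by
  obtain ⟨h1, h2, h3⟩ := hk
  obtain ⟨h1', h2', h3'⟩ := isArgmin_fOf A i j h
  exact hA (le_antisymm (h3 _ h1' h2') (h3' _ h1 h2))

noncomputable def AT {n : ℕ} (t : BT) : Fin n → ℝ :=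
  fun i => (((mkN t 0).getD i 0 : ℕ) : ℝ)

def FT (t : BT) : ℕ → ℝ := fun x => (((mkN t 0).getD x 0 : ℕ) : ℝ)

lemma extF_AT {n : ℕ} (t : BT) (ht : t.size = n) : extF (AT (n := n) t) = FT t := by
  funext x
  rw [extF]
  split
  · rfl
  · rw [FT, List.getD_eq_default]
    · simp
    · rw [mkN_length]; omega

lemma AT_inj {n : ℕ} (t : BT) (ht : t.size = n) : Function.Injective (AT (n := n) t) := by
  intro x y hxy
  rw [AT, AT] at hxy
  have h1 : ((mkN t 0).getD x 0) = ((mkN t 0).getD y 0) := by exact_mod_cast hxy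
  have hx : (x : ℕ) < (mkN t 0).length := by rw [mkN_length]; omega
  have hy : (y : ℕ) < (mkN t 0).length := by rw [mkN_length]; omega
  rw [List.getD_eq_getElem _ _ hx, List.getD_eq_getElem _ _ hy] at h1
  exact Fin.ext ((List.Nodup.getElem_inj_iff (mkN_nodup t 0)).mp h1)

lemma FT_inj {n : ℕ} (t : BT) (ht : t.size = n) :
    ∀ x y, x < n → y < n → FT t x = FT t y → x = y := by
  have := extF_AT (n := n) t ht
  rw [← this]
  exact extF_inj (AT_inj t ht)

lemma shaped_FT (t : BT) : Shaped (FT t) 0 t := by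
  refine shaped_mkN t 0 0 (FT t) (fun x hx => ?_)
  rw [FT, Nat.zero_add]

lemma bld_FT {n : ℕ} (t : BT) (ht : t.size = n) : bld (FT t) n 0 n = t := by
  have := bld_shaped (FT t) n t 0 (by omega) (shaped_FT t)
  rwa [Nat.zero_add, ht] at this

/-! ### BT ≃ Tree Unit -/

def toT : BT → Tree Unit
  | .leaf => .nil
  | .node l r => .node () (toT l) (toT r)

def ofT : Tree Unit → BT
  | .nil => .leaf
  | .node _ l r => .node (ofT l) (ofT r)

lemma ofT_toT : ∀ t, ofT (toT t) = t
  | .leaf => rfl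
  | .node l r => by rw [toT, ofT, ofT_toT l, ofT_toT r]

lemma toT_ofT : ∀ t, toT (ofT t) = t
  | .nil => rfl
  | .node _ l r => by rw [ofT, toT, toT_ofT l, toT_ofT r]

lemma numNodes_toT : ∀ t : BT, (toT t).numNodes = t.size
  | .leaf => rfl
  | .node l r => by
    exact congrArg₂ (· + · + 1) (numNodes_toT l) (numNodes_toT r)

lemma size_ofT : ∀ t : Tree Unit, (ofT t).size = t.numNodes
  | .nil => rfl
  | .node _ l r => by exact congrArg₂ (· + · + 1) (size_ofT l) (size_ofT r)

noncomputable def treeEquiv (n : ℕ) :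
    {t : BT // t.size = n} ≃ {t : Tree Unit // t ∈ Tree.treesOfNumNodesEq n} where
  toFun t := ⟨toT t.1, by rw [BinaryTree.mem_treesOfNumNodesEq]; exact (numNodes_toT _).trans t.2⟩
  invFun t := ⟨ofT t.1, by rw [size_ofT]; exact (BinaryTree.mem_treesOfNumNodesEq.mp t.2)⟩
  left_inv t := Subtype.ext (ofT_toT t.1)
  right_inv t := Subtype.ext (toT_ofT t.1)

/-! ### main theorem -/

end RMQAux

open RMQAux in
/-- The number of equivalence classes of length-`n` arrays of distinct values under
"same answer to every range minimum query" equals the `n`-th Catalan number. -/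
theorem stmt2 (n : ℕ) :
    Set.ncard { f : ∀ i j : Fin n, i ≤ j → Fin n |
        ∃ A : Fin n → ℝ, Function.Injective A ∧
          ∀ i j (h : i ≤ j), isArgmin A i j (f i j h) }
      = catalan n := by
  classical
  set S := { f : ∀ i j : Fin n, i ≤ j → Fin n |
        ∃ A : Fin n → ℝ, Function.Injective A ∧
          ∀ i j (h : i ≤ j), isArgmin A i j (f i j h) } with hS
  set E : {t : BT // t.size = n} → (∀ i j : Fin n, i ≤ j → Fin n) :=
    fun t => fOf (AT (n := n) t.1) with hE
  -- mi values of FT determine fOf of AT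
  have hmiE : ∀ (t : {t : BT // t.size = n}) (i j : Fin n) (h : i ≤ j),
      (E t i j h : ℕ) = mi (FT t.1) i j := by
    intro t i j h
    rw [hE]
    show mi (extF (AT (n := n) t.1)) i j = mi (FT t.1) i j
    rw [extF_AT t.1 t.2]
  have hrange : S = Set.range E := by
    ext f
    constructor
    · rintro ⟨A, hAinj, hAmin⟩
      have hfOf : f = fOf A := by
        funext i j h
        exact fOf_unique hAinj h (hAmin i j h)
      set t₀ : BT := bld (extF A) n 0 n with ht₀
      have hst₀ : t₀.size = n := by
        have := size_bld (extF A) n 0 n (by omega)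
        rw [← ht₀] at this; omega
      refine ⟨⟨t₀, hst₀⟩, ?_⟩
      rw [hfOf]
      funext i j h
      apply Fin.ext
      rw [hmiE ⟨t₀, hst₀⟩ i j h]
      show mi (FT t₀) i j = (fOf A i j h : ℕ)
      have hbldeq : bld (FT t₀) n 0 n = bld (extF A) n 0 n := by
        rw [bld_FT t₀ hst₀]
      exact mi_eq_of_bld_eq (FT t₀) (extF A) n (FT_inj t₀ hst₀) (extF_inj hAinj)
        n 0 n (le_refl n) (by omega) hbldeq i j (Nat.zero_le _) h j.isLt
    · rintro ⟨t, rfl⟩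
      exact ⟨AT (n := n) t.1, AT_inj t.1 t.2, fun i j h => isArgmin_fOf _ i j h⟩
  have hEinj : Function.Injective E := by
    intro t t' hEt
    have hmi : ∀ p q, p ≤ q → q < n → mi (FT t.1) p q = mi (FT t'.1) p q := by
      intro p q hpq hq
      have hp : p < n := by omega
      have h1 := hmiE t ⟨p, hp⟩ ⟨q, hq⟩ hpq
      have h2 := hmiE t' ⟨p, hp⟩ ⟨q, hq⟩ hpq
      rw [hEt] at h1
      rw [← h1, ← h2]
    have := bld_eq_of_mi_eq (FT t.1) (FT t'.1) n hmi n 0 n (le_refl n)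
    rw [bld_FT t.1 t.2, bld_FT t'.1 t'.2] at this
    exact Subtype.ext this
  rw [hrange, ← Nat.card_coe_set_eq, Nat.card_range_of_injective hEinj,
    Nat.card_congr (treeEquiv n), Nat.card_eq_fintype_card, Fintype.card_coe,
    BinaryTree.treesOfNumNodesEq_card_eq_catalan]
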